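/- Let 0 ≤ α < 1 and β > 1. For every word w ∈ L^{α,β}, the follower set F(w) = {x ∈ A^ℕ : wx ∈ X^{α,β}} equals {x ∈ X^{α,β} : σ^{k1(w)}(a) ⪯ x ⪯ σ^{k2(w)}(b)}. -/

import Mathlib

open Filter Topology MeasureTheory ENNReal
open scoped Classical

noncomputable section

namespace AB

/-- The (α,β)-transformation `T(x) = βx + α − ⌊βx + α⌋`. -/
def T (α β : ℝ) (x : ℝ) : ℝ := β * x + α - ⌊β * x + α⌋

/-- `λ = ⌈α+β⌉ − 1`, as a natural number. -/
def lamNat (α β : ℝ) : ℕ := (⌈α + β⌉ - 1).toNat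

/-- The digit of `x ∈ [0,1)`: the index `k` with `x ∈ J_k`, namely `⌊βx + α⌋`. -/
def digit (α β : ℝ) (x : ℝ) : ℕ := (⌊β * x + α⌋).toNat

/-- The (α,β)-expansion of `x`. -/
def iSeq (α β : ℝ) (x : ℝ) : ℕ → ℕ := fun n => digit α β ((T α β)^[n] x)

/-- The one-sided (α,β)-shift: closure (in the product topology) of the set of expansions. -/
def Xab (α β : ℝ) : Set (ℕ → ℕ) :=
  closure {s | ∃ x ∈ Set.Ico (0 : ℝ) 1, s = iSeq α β x}

/-- Word of given length read in a one-sided sequence starting at position `k`. -/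
def wordN (s : ℕ → ℕ) (k len : ℕ) : List ℕ := (List.range len).map fun i => s (k + i)

/-- The language of the (α,β)-shift: finite words appearing in points of `Xab`. -/
def Lang (α β : ℝ) : Set (List ℕ) :=
  {w | ∃ s ∈ Xab α β, ∃ k : ℕ, w = wordN s k w.length}

/-- `a = i_{α,β}(0)`. -/
def aSeq (α β : ℝ) : ℕ → ℕ := iSeq α β 0

/-- The prefix of length `l` of a sequence, as a word. -/
def pre (s : ℕ → ℕ) (l : ℕ) : List ℕ := (List.range l).map s

/-- Lexicographic (non-strict) order on words. -/
def wordLe (u v : List ℕ) : Prop := u = v ∨ List.Lex (· < ·) u v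

/-- Lexicographic (non-strict) order on one-sided sequences. -/
def seqLe (x y : ℕ → ℕ) : Prop :=
  x = y ∨ ∃ n : ℕ, (∀ i < n, x i = y i) ∧ x n < y n

/-- The largest `k ≤ |w|` such that the length-`k` suffix of `w` equals the length-`k`
prefix of `s` (this is `k1` for `s = a` and `k2` for `s = b`). -/
def kk (s : ℕ → ℕ) (w : List ℕ) : ℕ :=
  Nat.findGreatest (fun k => w.drop (w.length - k) = pre s k) w.length

/-- The set of finite prefixes of a sequence (`P^a`, `P^b`). -/
def Pset (s : ℕ → ℕ) : Set (List ℕ) := {u | ∃ l : ℕ, u = pre s l}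

/-- The distinguished suffix `s(w)`. -/
def sWord (a b : ℕ → ℕ) (w : List ℕ) : List ℕ :=
  if kk b w < kk a w then w.drop (w.length - kk a w)
  else if kk a w < kk b w then w.drop (w.length - kk b w)
  else []

/-- The hat operation on `P = P^a ∪ P^b` (for `β > 3`, `α = 1/β`). -/
def hatP (a b : ℕ → ℕ) (lam : ℕ) (u : List ℕ) : List ℕ :=
  if u = [] then []
  else if u ∈ Pset a then u.dropLast ++ [u.getLast?.getD 0 + 1]
  else if 3 ≤ u.getLast?.getD 0 then u.dropLast ++ [u.getLast?.getD 0 - 1]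
  else
    (u.set (u.length - kk a u.dropLast - 2) (u.getD (u.length - kk a u.dropLast - 2) 0 - 1)).set
      (u.length - kk a u.dropLast - 1) (lam - 1)

/-- `ŵ` for `w = v·s(w)`: replace the distinguished suffix by its hat. -/
def hatW (a b : ℕ → ℕ) (lam : ℕ) (w : List ℕ) : List ℕ :=
  w.take (w.length - (sWord a b w).length) ++ hatP a b lam (sWord a b w)

/-- `w̃`: the hat operation applied twice. -/
def tildeW (a b : ℕ → ℕ) (lam : ℕ) (w : List ℕ) : List ℕ :=
  hatW a b lam (hatW a b lam w)

/-- `z(u)` for `u ∈ P^b`. -/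
def zP (a b : ℕ → ℕ) (u : List ℕ) : ℕ :=
  if u = [] then 0
  else sSup ({k : ℕ | (u ++ pre (fun i => a (kk a u + i)) k) ∈ Pset b} ∪ {0})

/-- `z(w)` for a word `w` in the language. -/
def zW (a b : ℕ → ℕ) (w : List ℕ) : ℕ :=
  if kk a w < kk b w then zP a b (w.drop (w.length - kk b w)) else 0

/-- `z̄(n) = max{z(u) : u prefix of b, |u| ≤ n}`. -/
def zbar (a b : ℕ → ℕ) (n : ℕ) : ℕ :=
  (Finset.range (n + 1)).sup fun l => zP a b (pre b l)

/-- The natural extension `Σ^{α,β}`. -/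
def SigmaAB (α β : ℝ) : Set (ℤ → ℕ) :=
  {x | ∀ k : ℤ, (fun n : ℕ => x (k + n)) ∈ Xab α β}

/-- `σ^j` on two-sided sequences. -/
def shiftI {A : Type*} (j : ℤ) (x : ℤ → A) : ℤ → A := fun n => x (n + j)

/-- Word of given length read in a two-sided sequence starting at position `k`. -/
def wordZ (x : ℤ → ℕ) (k : ℤ) (len : ℕ) : List ℕ := (List.range len).map fun i => x (k + i)

/-- The map `g : L^{α,β} → {0,1}`. -/
def gW (a b : ℕ → ℕ) (w : List ℕ) : ℕ :=
  if kk a w = 0 ∧ 0 < kk b w ∧ b (kk b w) ≤ 1 then 0 else 1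

/-- `w^♯`: the word `w` placed at positions `k,…,k+|w|−1`, followed by `g(w)` at
position `k+|w|`, and `1` at all other positions. -/
def wSharp (a b : ℕ → ℕ) (k : ℤ) (w : List ℕ) : ℤ → ℕ :=
  fun j => if k ≤ j ∧ j < k + w.length then w.getD (j - k).toNat 1
           else if j = k + w.length then gW a b w else 1

/-- The finite approximation sets `E^n ⊆ Σ^{α,β}`. -/
def En (α β : ℝ) (b : ℕ → ℕ) (n : ℕ) : Set (ℤ → ℕ) :=
  {x | wordZ x (-(n : ℤ)) (2 * n + 1) ∈ Lang α β ∧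
       x ((n : ℤ) + 1) = gW (aSeq α β) b (wordZ x (-(n : ℤ)) (2 * n + 1)) ∧
       ∀ j : ℤ, j < -(n : ℤ) ∨ (n : ℤ) + 1 < j → x j = 1}

/-- `s(x_k^-) = ε` for the left-infinite word `x_{(-∞,k-1]}`: no nonempty suffix of it is a
prefix of `a` or of `b`. -/
def leftStar (a b : ℕ → ℕ) (x : ℤ → ℕ) (k : ℤ) : Prop :=
  (∀ K : ℕ, 1 ≤ K → ¬ ∀ i : ℕ, i < K → x (k - K + i) = a i) ∧
  (∀ K : ℕ, 1 ≤ K → ¬ ∀ i : ℕ, i < K → x (k - K + i) = b i)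

/-- `E^n_{[k,l]}(v)`. -/
def EnCyl (α β : ℝ) (b : ℕ → ℕ) (n : ℕ) (k l : ℤ) (v : List ℕ) : Set (ℤ → ℕ) :=
  {x ∈ En α β b n | wordZ x k (l - k + 1).toNat = v}

/-- `E^{*,n}_{[k,l]}(v)`. -/
def EnCylStar (α β : ℝ) (b : ℕ → ℕ) (n : ℕ) (k l : ℤ) (v : List ℕ) : Set (ℤ → ℕ) :=
  {x ∈ EnCyl α β b n k l v | leftStar (aSeq α β) b x k}

/-- The Birkhoff sum `∑_{j=−n}^{n} φ(σ^j x)`. -/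
def birkhoff (φ : (ℤ → ℕ) → ℝ) (n : ℕ) (x : ℤ → ℕ) : ℝ :=
  ∑ j ∈ Finset.Icc (-(n : ℤ)) (n : ℤ), φ (shiftI j x)

/-- `Ξ^n_{[k,l]}(v)`. -/
def Xi (α β : ℝ) (b : ℕ → ℕ) (φ : (ℤ → ℕ) → ℝ) (n : ℕ) (k l : ℤ) (v : List ℕ) : ℝ :=
  ∑' x : (EnCyl α β b n k l v), Real.exp (birkhoff φ n x.1)

/-- `Ξ^{*,n}_{[k,l]}(v)`. -/
def XiStar (α β : ℝ) (b : ℕ → ℕ) (φ : (ℤ → ℕ) → ℝ) (n : ℕ) (k l : ℤ) (v : List ℕ) : ℝ :=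
  ∑' x : (EnCylStar α β b n k l v), Real.exp (birkhoff φ n x.1)

/-- `δ_i(f)`, as an extended nonnegative real. -/
def oscE {A : Type*} (f : (ℤ → A) → ℝ) (i : ℤ) : ℝ≥0∞ :=
  ⨆ (x : ℤ → A) (y : ℤ → A) (_ : ∀ k : ℤ, k ≠ i → x k = y k), ENNReal.ofReal |f x - f y|

/-- `‖f‖_δ` for a function on the full shift. -/
def enormFull {A : Type*} (f : (ℤ → A) → ℝ) : ℝ≥0∞ := ∑' i : ℤ, oscE f i

/-- `‖f‖_δ` for a function on a subshift `X`: infimum over continuous extensions. -/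
def enormOn {A : Type*} [TopologicalSpace A] (X : Set (ℤ → A)) (f : (ℤ → A) → ℝ) : ℝ≥0∞ :=
  ⨅ (g : (ℤ → A) → ℝ) (_ : Continuous g) (_ : ∀ x ∈ X, g x = f x), enormFull g

/-- `f` has bounded total oscillations on `X` (i.e. `f ∈ B(X)`). -/
def BTO {A : Type*} [TopologicalSpace A] (X : Set (ℤ → A)) (f : (ℤ → A) → ℝ) : Prop :=
  ContinuousOn f X ∧ enormOn X f ≠ ⊤

/-- The real value of `‖f‖_δ`. -/
def dnorm {A : Type*} [TopologicalSpace A] (X : Set (ℤ → A)) (f : (ℤ → A) → ℝ) : ℝ :=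
  (enormOn X f).toReal

/-- The pressure `p(φ)`. -/
def pressure (α β : ℝ) (b : ℕ → ℕ) (φ : (ℤ → ℕ) → ℝ) : ℝ :=
  limUnder atTop fun n : ℕ =>
    Real.log (∑' x : (En α β b n), Real.exp (birkhoff φ n x.1)) / (2 * n + 1)

/-- `ν` is a tangent functional to the pressure at `φ` (an equilibrium measure for `φ`). -/
def IsTangent (α β : ℝ) (b : ℕ → ℕ) (φ : (ℤ → ℕ) → ℝ) (ν : Measure (ℤ → ℕ)) : Prop :=
  ∀ f : (ℤ → ℕ) → ℝ, ContinuousOn f (SigmaAB α β) →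
    pressure α β b φ + ∫ x, f x ∂ν ≤ pressure α β b (fun x => φ x + f x)

/-- The cylinder `[x_1 … x_m]` in `Σ^{α,β}`. -/
def cyl (α β : ℝ) (x : ℤ → ℕ) (m : ℕ) : Set (ℤ → ℕ) :=
  {y ∈ SigmaAB α β | ∀ i : ℕ, 1 ≤ i → i ≤ m → y (i : ℤ) = x (i : ℤ)}

/-- `ν` is a weak Gibbs measure for `ψ` on `Σ^{α,β}`. -/
def WeakGibbs (α β : ℝ) (ν : Measure (ℤ → ℕ)) (ψ : (ℤ → ℕ) → ℝ) : Prop :=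
  ∀ δ : ℝ, 0 < δ → ∃ N : ℕ, ∀ m : ℕ, N ≤ m → ∀ x ∈ SigmaAB α β,
    |Real.log (ν (cyl α β x m)).toReal / m -
      (∑ l ∈ Finset.Icc (1 : ℤ) (m : ℤ), ψ (shiftI l x)) / m| ≤ δ


/-- Concatenation `w·x` of a word and a one-sided sequence. -/
def wordApp (w : List ℕ) (x : ℕ → ℕ) : ℕ → ℕ :=
  fun n => if n < w.length then w.getD n 1 else x (n - w.length)

/-- `σ^k` on one-sided sequences. -/
def shiftN (k : ℕ) (s : ℕ → ℕ) : ℕ → ℕ := fun n => s (k + n)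

end AB

namespace AB

section Aux

variable {α β : ℝ}

/-! ### Basic facts about `T`, `digit`, `iSeq` -/

lemma T_eq_fract (α β x : ℝ) : T α β x = Int.fract (β * x + α) := by
  rw [T, Int.fract]

lemma T_mem (α β : ℝ) (x : ℝ) : T α β x ∈ Set.Ico (0 : ℝ) 1 := by
  rw [T_eq_fract]; exact ⟨Int.fract_nonneg _, Int.fract_lt_one _⟩

lemma iter_mem (hx : x ∈ Set.Ico (0 : ℝ) 1) (n : ℕ) : (T α β)^[n] x ∈ Set.Ico (0 : ℝ) 1 := by
  cases n with
  | zero => simpa using hx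
  | succ n => rw [Function.iterate_succ_apply']; exact T_mem α β _

lemma floor_nonneg_of (hα0 : 0 ≤ α) (hβ : 1 < β) (hx : 0 ≤ x) : 0 ≤ ⌊β * x + α⌋ := by
  have : (0:ℝ) ≤ β * x + α := by nlinarith
  exact Int.floor_nonneg.2 this

lemma digit_cast (hα0 : 0 ≤ α) (hβ : 1 < β) (hx : 0 ≤ x) :
    (digit α β x : ℤ) = ⌊β * x + α⌋ := by
  simp [digit, Int.toNat_of_nonneg (floor_nonneg_of hα0 hβ hx)]

lemma digit_mono (hα0 : 0 ≤ α) (hβ : 1 < β) (hx : 0 ≤ x) (hxy : x ≤ y) :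
    digit α β x ≤ digit α β y := by
  have h1 : ⌊β * x + α⌋ ≤ ⌊β * y + α⌋ := by
    apply Int.floor_le_floor; nlinarith
  simpa [digit] using Int.toNat_le_toNat h1

lemma T_of_digit (hα0 : 0 ≤ α) (hβ : 1 < β) (hx : 0 ≤ x) :
    T α β x = β * x + α - digit α β x := by
  rw [T]
  rw [show ((⌊β * x + α⌋ : ℤ) : ℝ) = (digit α β x : ℝ) from by
    exact_mod_cast (digit_cast hα0 hβ hx).symm]

lemma digit_eq_iff (hα0 : 0 ≤ α) (hβ : 1 < β) (hx : 0 ≤ x) {c : ℕ} :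
    digit α β x = c ↔ ((c : ℝ) ≤ β * x + α ∧ β * x + α < c + 1) := by
  constructor
  · intro h
    have h2 : ⌊β * x + α⌋ = (c : ℤ) := by rw [← digit_cast hα0 hβ hx, h]
    constructor
    · have := Int.floor_le (β * x + α); rw [h2] at this; exact_mod_cast this
    · have := Int.lt_floor_add_one (β * x + α); rw [h2] at this; exact_mod_cast this
  · rintro ⟨h1, h2⟩
    have h3 : ⌊β * x + α⌋ = (c : ℤ) := by
      apply Int.floor_eq_iff.2; constructor <;> [exact_mod_cast h1; exact_mod_cast h2]
    have := digit_cast hα0 hβ hx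
    rw [h3] at this; exact_mod_cast this

lemma lam_cast (hα0 : 0 ≤ α) (hβ : 1 < β) : (lamNat α β : ℤ) = ⌈α + β⌉ - 1 := by
  have : (1:ℤ) ≤ ⌈α + β⌉ := by
    rw [Int.le_ceil_iff]; push_cast; nlinarith
  simp only [lamNat]; omega

lemma digit_le_lam (hα0 : 0 ≤ α) (hα1 : α < 1) (hβ : 1 < β) (hx : x ∈ Set.Ico (0:ℝ) 1) :
    digit α β x ≤ lamNat α β := by
  have h1 : (digit α β x : ℤ) ≤ (lamNat α β : ℤ) := by
    rw [digit_cast hα0 hβ hx.1, lam_cast hα0 hβ]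
    have h2 : β * x + α < α + β := by nlinarith [hx.1, hx.2]
    have h3 : (⌊β * x + α⌋ : ℝ) ≤ β * x + α := Int.floor_le _
    have h4 : (⌊β * x + α⌋ : ℝ) < ⌈α + β⌉ := lt_of_le_of_lt h3 (lt_of_lt_of_le h2 (Int.le_ceil _))
    have : ⌊β * x + α⌋ < ⌈α + β⌉ := by exact_mod_cast h4
    omega
  exact_mod_cast h1

lemma iSeq_zero (α β : ℝ) (x : ℝ) : iSeq α β x 0 = digit α β x := rfl

lemma iSeq_add (α β : ℝ) (x : ℝ) (j i : ℕ) :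
    iSeq α β x (j + i) = iSeq α β ((T α β)^[j] x) i := by
  simp only [iSeq]
  rw [Nat.add_comm j i, Function.iterate_add_apply]

lemma iSeq_succ (α β : ℝ) (x : ℝ) (i : ℕ) :
    iSeq α β x (i + 1) = iSeq α β (T α β x) i := by
  simp only [iSeq]
  rw [Function.iterate_succ_apply]

/-! ### The strict lexicographic order -/

/-- Strict lexicographic order on sequences. -/
def sLt (x y : ℕ → ℕ) : Prop := ∃ n : ℕ, (∀ i < n, x i = y i) ∧ x n < y n

lemma seqLe_or_sLt (x y : ℕ → ℕ) : seqLe x y ∨ sLt y x := by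
  by_cases h : x = y
  · exact Or.inl (Or.inl h)
  · have h2 : ∃ n, x n ≠ y n := by
      by_contra h3; push_neg at h3; exact h (funext h3)
    classical
    have hn : x (Nat.find h2) ≠ y (Nat.find h2) := Nat.find_spec h2
    have hag : ∀ i < Nat.find h2, x i = y i := fun i hi => by
      by_contra hne; exact Nat.find_min h2 hi hne
    rcases Nat.lt_or_ge (x (Nat.find h2)) (y (Nat.find h2)) with h4 | h4
    · exact Or.inl (Or.inr ⟨_, hag, h4⟩)
    · exact Or.inr ⟨_, fun i hi => (hag i hi).symm, by omega⟩

lemma sLt_asymm {x y : ℕ → ℕ} (h1 : sLt x y) (h2 : sLt y x) : False := by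
  obtain ⟨m, ha, hl⟩ := h1
  obtain ⟨m', ha', hl'⟩ := h2
  rcases Nat.lt_trichotomy m m' with h | h | h
  · have := ha' m h; omega
  · subst h; omega
  · have := ha m' h; omega

lemma not_sLt_of_seqLe {x y : ℕ → ℕ} (h : seqLe x y) (h2 : sLt y x) : False := by
  rcases h with rfl | h
  · obtain ⟨m, _, hl⟩ := h2; omega
  · exact sLt_asymm h h2

lemma seqLe_of_not_sLt {x y : ℕ → ℕ} (h : ¬ sLt y x) : seqLe x y :=
  (seqLe_or_sLt x y).resolve_right h

lemma sLt_of_agree_of_sLt {x y y' : ℕ → ℕ} {m : ℕ} (h : sLt x y) (hm : h.choose < m)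
    (hag : ∀ i < m, y i = y' i) : sLt x y' := by
  obtain ⟨ha, hl⟩ := h.choose_spec
  exact ⟨h.choose, fun i hi => (ha i hi).trans (hag i (by omega)), by
    rw [← hag _ hm]; exact hl⟩

/-! ### Monotonicity of `iSeq` -/

lemma iter_diff (hα0 : 0 ≤ α) (hβ : 1 < β) (hu : u ∈ Set.Ico (0:ℝ) 1)
    (hv : v ∈ Set.Ico (0:ℝ) 1) {m : ℕ}
    (hag : ∀ i < m, iSeq α β u i = iSeq α β v i) :
    ∀ i ≤ m, (T α β)^[i] v - (T α β)^[i] u = β ^ i * (v - u) := by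
  intro i hi
  induction i with
  | zero => simp
  | succ i ih =>
    have hi' : i ≤ m := by omega
    have hiu := iter_mem (α := α) (β := β) hu i
    have hiv := iter_mem (α := α) (β := β) hv i
    rw [Function.iterate_succ_apply', Function.iterate_succ_apply',
      T_of_digit hα0 hβ hiu.1, T_of_digit hα0 hβ hiv.1]
    have hd : iSeq α β u i = iSeq α β v i := hag i (by omega)
    simp only [iSeq] at hd
    have hd' : (digit α β ((T α β)^[i] u) : ℝ) = digit α β ((T α β)^[i] v) := by
      exact_mod_cast hd
    have := ih hi'
    rw [pow_succ]
    push_cast [iSeq] at hd' ⊢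
    nlinarith [this]

lemma iSeq_mono (hα0 : 0 ≤ α) (hβ : 1 < β) (hu : u ∈ Set.Ico (0:ℝ) 1)
    (hv : v ∈ Set.Ico (0:ℝ) 1) (huv : u ≤ v) : seqLe (iSeq α β u) (iSeq α β v) := by
  apply seqLe_of_not_sLt
  rintro ⟨m, hag, hl⟩
  -- digits agree below m, digit of T^[m] v < digit of T^[m] u
  have hd := iter_diff hα0 hβ hu hv (fun i hi => (hag i hi).symm) m le_rfl
  have h1 : (T α β)^[m] v < (T α β)^[m] u := by
    by_contra h2
    push_neg at h2
    have := digit_mono hα0 hβ (iter_mem hu m).1 h2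
    simp only [iSeq] at hl
    omega
  have h3 : (0:ℝ) < β ^ m := by positivity
  nlinarith

end Aux

/-! ### The left-limit orbit of 1 -/

/-- Left-limit orbit of `1` under `T`. -/
def ell (α β : ℝ) : ℕ → ℝ
  | 0 => 1
  | j+1 => β * ell α β j + α - (⌈β * ell α β j + α⌉ - 1)

/-- The itinerary of `1` from the left. -/
def bbSeq (α β : ℝ) : ℕ → ℕ := fun j => (⌈β * ell α β j + α⌉ - 1).toNat

section Aux2

variable {α β : ℝ}

lemma ell_mem (hα0 : 0 ≤ α) (hβ : 1 < β) (j : ℕ) :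
    0 < ell α β j ∧ ell α β j ≤ 1 := by
  induction j with
  | zero => norm_num [ell]
  | succ j ih =>
    have h1 := Int.ceil_lt_add_one (β * ell α β j + α)
    have h2 := Int.le_ceil (β * ell α β j + α)
    have he : ell α β (j+1) = β * ell α β j + α - ((⌈β * ell α β j + α⌉ : ℝ) - 1) := rfl
    rw [he]
    constructor <;> nlinarith

lemma ceil_pos' (hα0 : 0 ≤ α) (hβ : 1 < β) (j : ℕ) : 1 ≤ ⌈β * ell α β j + α⌉ := by
  have h := (ell_mem hα0 hβ j).1
  have : (0:ℝ) < β * ell α β j + α := by nlinarith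
  exact Int.ceil_pos.2 this

lemma bb_cast (hα0 : 0 ≤ α) (hβ : 1 < β) (j : ℕ) :
    (bbSeq α β j : ℤ) = ⌈β * ell α β j + α⌉ - 1 := by
  have := ceil_pos' hα0 hβ (α := α) (β := β) j
  simp only [bbSeq]; omega

lemma bb_lt (hα0 : 0 ≤ α) (hβ : 1 < β) (j : ℕ) :
    (bbSeq α β j : ℝ) < β * ell α β j + α ∧ β * ell α β j + α ≤ (bbSeq α β j : ℝ) + 1 := by
  have h1 := Int.ceil_lt_add_one (β * ell α β j + α)
  have h2 := Int.le_ceil (β * ell α β j + α)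
  have h3 : ((bbSeq α β j : ℤ) : ℝ) = (⌈β * ell α β j + α⌉ : ℝ) - 1 := by
    rw [bb_cast hα0 hβ]; push_cast; ring
  push_cast at h3
  constructor <;> nlinarith

lemma ell_succ (hα0 : 0 ≤ α) (hβ : 1 < β) (j : ℕ) :
    ell α β (j+1) = β * ell α β j + α - bbSeq α β j := by
  show β * ell α β j + α - _ = _
  have h3 : ((bbSeq α β j : ℤ) : ℝ) = (⌈β * ell α β j + α⌉ : ℝ) - 1 := by
    rw [bb_cast hα0 hβ]; push_cast; ring
  push_cast at h3 ⊢
  linarith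

lemma leftLim (hα0 : 0 ≤ α) (hβ : 1 < β) (M j : ℕ) :
    ∃ δ : ℝ, 0 < δ ∧ δ ≤ ell α β j ∧
      ∀ t, ell α β j - δ < t → t < ell α β j → ∀ i < M, iSeq α β t i = bbSeq α β (j + i) := by
  induction M generalizing j with
  | zero => exact ⟨ell α β j, (ell_mem hα0 hβ j).1, le_rfl, fun t _ _ i hi => by omega⟩
  | succ M ih =>
    obtain ⟨δ', hδ'0, hδ'1, hδ'2⟩ := ih (j+1)
    have hb0 := (bb_lt hα0 hβ (α := α) (β := β) j).1
    have hb1 := (bb_lt hα0 hβ (α := α) (β := β) j).2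
    have hell := ell_mem hα0 hβ (α := α) (β := β) j
    have hβ0 : (0:ℝ) < β := by linarith
    refine ⟨min (ell α β j) (min (ell α β j - (bbSeq α β j - α) / β) (δ' / β)), ?_, ?_, ?_⟩
    · refine lt_min hell.1 (lt_min ?_ (by positivity))
      rw [sub_pos, div_lt_iff₀ hβ0]; nlinarith
    · exact min_le_left _ _
    · intro t ht1 ht2 i hi
      have hd1 : ell α β j - min (ell α β j) (min (ell α β j - (bbSeq α β j - α) / β) (δ' / β))
          ≥ 0 := by
        have := min_le_left (ell α β j) (min (ell α β j - (bbSeq α β j - α) / β) (δ' / β))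
        linarith
      have htpos : (0:ℝ) ≤ t := by linarith
      have hd2 : ell α β j - min (ell α β j) (min (ell α β j - (bbSeq α β j - α) / β) (δ' / β))
          ≥ (bbSeq α β j - α) / β := by
        have h1 : min (ell α β j) (min (ell α β j - (bbSeq α β j - α) / β) (δ' / β)) ≤
            ell α β j - (bbSeq α β j - α) / β :=
          le_trans (min_le_right _ _) (min_le_left _ _)
        linarith
      have hd3 : min (ell α β j) (min (ell α β j - (bbSeq α β j - α) / β) (δ' / β)) ≤ δ' / β :=
        le_trans (min_le_right _ _) (min_le_right _ _)
      -- the digit of t is bbSeq j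
      have hdig : digit α β t = bbSeq α β j := by
        rw [digit_eq_iff hα0 hβ htpos]
        constructor
        · have h4 : (bbSeq α β j - α) / β < t := by linarith
          rw [div_lt_iff₀ hβ0] at h4
          linarith
        · have : β * t < β * ell α β j := by nlinarith
          linarith
      rcases Nat.eq_zero_or_pos i with rfl | hipos
      · simpa [iSeq, digit] using hdig
      · obtain ⟨i', rfl⟩ : ∃ i', i = i' + 1 := ⟨i - 1, by omega⟩
        rw [iSeq_succ]
        have hTt : T α β t = β * t + α - bbSeq α β j := by
          rw [T_of_digit hα0 hβ htpos, hdig]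
        have hes := ell_succ hα0 hβ (α := α) (β := β) j
        have h5 : T α β t < ell α β (j+1) := by rw [hTt, hes]; nlinarith
        have h6 : ell α β (j+1) - δ' < T α β t := by
          rw [hTt, hes]
          have : ell α β j - t < δ' / β := by linarith
          rw [lt_div_iff₀ hβ0] at this
          nlinarith
        have := hδ'2 (T α β t) h6 h5 i' (by omega)
        rw [this]
        congr 1
        omega

end Aux2

section Aux3

variable {α β : ℝ}

lemma exists_left_point (hα0 : 0 ≤ α) (hβ : 1 < β) {u : ℝ} (hu : u ∈ Set.Ico (0:ℝ) 1)
    {δ : ℝ} (hδ : 0 < δ) : ∃ t, u ≤ t ∧ 1 - δ < t ∧ t ∈ Set.Ico (0:ℝ) 1 := by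
  refine ⟨(max u (1 - δ) + 1) / 2, ?_, ?_, ?_, ?_⟩
  · have h1 : u ≤ max u (1 - δ) := le_max_left _ _
    have h2 : max u (1 - δ) < 1 := max_lt hu.2 (by linarith)
    linarith
  · have h1 : 1 - δ ≤ max u (1 - δ) := le_max_right _ _
    have h2 : max u (1 - δ) < 1 := max_lt hu.2 (by linarith)
    linarith
  · have h1 : (0:ℝ) ≤ max u (1 - δ) := le_trans hu.1 (le_max_left _ _)
    linarith
  · have h2 : max u (1 - δ) < 1 := max_lt hu.2 (by linarith)
    linarith

lemma iSeq_le_bb (hα0 : 0 ≤ α) (hβ : 1 < β) {u : ℝ} (hu : u ∈ Set.Ico (0:ℝ) 1) :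
    seqLe (iSeq α β u) (bbSeq α β) := by
  apply seqLe_of_not_sLt
  rintro ⟨m, hag, hl⟩
  obtain ⟨δ, hδ0, hδ1, hδ2⟩ := leftLim hα0 hβ (α := α) (β := β) (m+1) 0
  obtain ⟨t, htu, htδ, htm⟩ := exists_left_point hα0 hβ hu hδ0
  have hell0 : ell α β 0 = 1 := rfl
  have hbt : ∀ i < m + 1, iSeq α β t i = bbSeq α β i := by
    intro i hi
    have := hδ2 t (by rw [hell0]; linarith) (by rw [hell0]; exact htm.2) i hi
    simpa using this
  have hmono := iSeq_mono hα0 hβ hu htm htu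
  apply not_sLt_of_seqLe hmono
  exact ⟨m, fun i hi => (hbt i (by omega)).trans (hag i hi), by rw [hbt m (by omega)]; exact hl⟩

lemma shift_bb_le (hα0 : 0 ≤ α) (hβ : 1 < β) (d : ℕ) :
    seqLe (shiftN d (bbSeq α β)) (bbSeq α β) := by
  apply seqLe_of_not_sLt
  rintro ⟨m, hag, hl⟩
  obtain ⟨δ, hδ0, hδ1, hδ2⟩ := leftLim hα0 hβ (α := α) (β := β) (d+m+1) 0
  obtain ⟨t, htu, htδ, htm⟩ := exists_left_point hα0 hβ (Set.mem_Ico.2 ⟨le_rfl, one_pos⟩) hδ0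
  have hell0 : ell α β 0 = 1 := rfl
  have hbt : ∀ i < d + m + 1, iSeq α β t i = bbSeq α β i := by
    intro i hi
    simpa using hδ2 t (by rw [hell0]; linarith) (by rw [hell0]; exact htm.2) i hi
  have hmem := iter_mem (α := α) (β := β) htm d
  have hle := iSeq_le_bb hα0 hβ hmem
  apply not_sLt_of_seqLe hle
  refine ⟨m, fun i hi => ?_, ?_⟩
  · rw [← iSeq_add, hbt (d + i) (by omega)]
    exact (hag i hi).symm ▸ rfl
  · rw [← iSeq_add, hbt (d + m) (by omega)]
    exact hl

lemma le_shift_a (hα0 : 0 ≤ α) (hα1 : α < 1) (hβ : 1 < β) (d : ℕ) :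
    seqLe (aSeq α β) (shiftN d (aSeq α β)) := by
  have h0 : (0:ℝ) ∈ Set.Ico (0:ℝ) 1 := ⟨le_rfl, one_pos⟩
  have hmem := iter_mem (α := α) (β := β) h0 d
  have := iSeq_mono hα0 hβ h0 hmem hmem.1
  have heq : shiftN d (aSeq α β) = iSeq α β ((T α β)^[d] 0) := by
    funext i; simp only [shiftN, aSeq]; rw [iSeq_add]
  rw [heq]
  exact this

/-! ### Closure criterion in the product topology -/

lemma mem_closure_seq {D : Set (ℕ → ℕ)} {s : ℕ → ℕ} :
    s ∈ closure D ↔ ∀ N : ℕ, ∃ d ∈ D, ∀ i < N, d i = s i := by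
  constructor
  · intro h N
    have hopen : IsOpen {v : ℕ → ℕ | ∀ i < N, v i = s i} := by
      have he : {v : ℕ → ℕ | ∀ i < N, v i = s i} =
          ⋂ i ∈ Finset.range N, (fun v : ℕ → ℕ => v i) ⁻¹' {s i} := by
        ext v; simp [Finset.mem_range]
      rw [he]
      exact isOpen_biInter_finset fun i _ =>
        (continuous_apply i).isOpen_preimage _ (isOpen_discrete _)
    obtain ⟨d, hd1, hd2⟩ := mem_closure_iff.1 h _ hopen (fun i _ => rfl)
    exact ⟨d, hd2, hd1⟩
  · intro h
    rw [mem_closure_iff]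
    intro O hO hsO
    obtain ⟨I, U, hU, hsub⟩ := isOpen_pi_iff.1 hO s hsO
    obtain ⟨d, hdD, hd⟩ := h ((I.sup id) + 1)
    refine ⟨d, hsub fun i hi => ?_, hdD⟩
    rw [hd i (by have := Finset.le_sup (f := id) hi; simp only [id] at this; omega)]
    exact (hU i hi).2

lemma b_eq_bb (hα0 : 0 ≤ α) (hβ : 1 < β) {b : ℕ → ℕ}
    (hb : Tendsto (iSeq α β) (𝓝[<] (1 : ℝ)) (𝓝 b)) : b = bbSeq α β := by
  have h2 : Tendsto (iSeq α β) (𝓝[<] (1 : ℝ)) (𝓝 (bbSeq α β)) := by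
    rw [tendsto_pi_nhds]
    intro i
    obtain ⟨δ, hδ0, hδ1, hδ2⟩ := leftLim hα0 hβ (α := α) (β := β) (i+1) 0
    have hell0 : ell α β 0 = 1 := rfl
    rw [nhds_discrete, tendsto_pure]
    have hmem : Set.Ioo (1 - δ) 1 ∈ 𝓝[<] (1:ℝ) :=
      Ioo_mem_nhdsLT_of_mem ⟨by linarith, le_rfl⟩
    filter_upwards [hmem] with t ht
    simpa using hδ2 t (by rw [hell0]; exact ht.1) (by rw [hell0]; exact ht.2) i (by omega)
  exact tendsto_nhds_unique hb h2

end Aux3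

section Aux4

/-! ### Combinatorics of `kk` -/

lemma pre_length (s : ℕ → ℕ) (l : ℕ) : (pre s l).length = l := by simp [pre]

lemma pre_getElem (s : ℕ → ℕ) {l i : ℕ} (h : i < l) :
    (pre s l)[i]'(by simpa [pre_length]) = s i := by simp [pre]

lemma pre_succ (s : ℕ → ℕ) (k : ℕ) : pre s (k+1) = pre s k ++ [s k] := by
  simp [pre, List.range_succ]

lemma kk_le (s : ℕ → ℕ) (w : List ℕ) : kk s w ≤ w.length := Nat.findGreatest_le _

lemma kk_prop (s : ℕ → ℕ) (w : List ℕ) :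
    w.drop (w.length - kk s w) = pre s (kk s w) :=
by
  have h0 : (fun k => w.drop (w.length - k) = pre s k) 0 := by simp [pre]
  exact Nat.findGreatest_spec (P := fun k => w.drop (w.length - k) = pre s k)
    (Nat.zero_le _) h0

lemma kk_max (s : ℕ → ℕ) {w : List ℕ} {k : ℕ} (hk : k ≤ w.length)
    (h : w.drop (w.length - k) = pre s k) : k ≤ kk s w :=
  Nat.le_findGreatest hk h

lemma prop_append {s : ℕ → ℕ} {w : List ℕ} {c k : ℕ} (hk : k ≤ w.length) :
    ((w ++ [c]).drop ((w ++ [c]).length - (k+1)) = pre s (k+1)) ↔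
      (w.drop (w.length - k) = pre s k ∧ c = s k) := by
  have h1 : (w ++ [c]).length - (k+1) = w.length - k := by
    simp only [List.length_append, List.length_singleton]
    omega
  rw [h1, List.drop_append_of_le_length (by omega), pre_succ]
  constructor
  · intro h
    have h2 := List.append_inj' h (by simp)
    exact ⟨h2.1, by simpa using h2.2⟩
  · rintro ⟨h2, rfl⟩
    rw [h2]

lemma kk_append_succ (s : ℕ → ℕ) (w : List ℕ) {c : ℕ} (h : c = s (kk s w)) :
    kk s (w ++ [c]) = kk s w + 1 := by
  apply le_antisymm
  · by_contra hcon
    push_neg at hcon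
    have h0 : 0 < kk s (w ++ [c]) := by omega
    have hsp := kk_prop s (w ++ [c])
    obtain ⟨k, hk⟩ : ∃ k, kk s (w ++ [c]) = k + 1 := ⟨kk s (w ++ [c]) - 1, by omega⟩
    rw [hk] at hsp
    have hkle : k ≤ w.length := by
      have := kk_le s (w ++ [c]); simp at this; omega
    have h2 := (prop_append hkle).1 hsp
    have h3 := Nat.findGreatest_is_greatest (show kk s w < k by omega) hkle
    exact h3 h2.1
  · apply kk_max
    · have := kk_le s w
      simp only [List.length_append, List.length_singleton]
      omega
    · exact (prop_append (kk_le s w)).2 ⟨kk_prop s w, h⟩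

lemma kk_append_zero (s : ℕ → ℕ) (w : List ℕ) {c : ℕ}
    (h : ∀ k, k ≤ kk s w → w.drop (w.length - k) = pre s k → c ≠ s k) :
    kk s (w ++ [c]) = 0 := by
  unfold kk
  rw [Nat.findGreatest_eq_zero_iff]
  intro m hm0 hmle hP
  obtain ⟨k, rfl⟩ : ∃ k, m = k + 1 := ⟨m - 1, by omega⟩
  have hkle : k ≤ w.length := by simp at hmle; omega
  have h2 := (prop_append hkle).1 hP
  exact h k (kk_max s hkle h2.1) h2.1 h2.2

lemma pre_overlap {s : ℕ → ℕ} {w : List ℕ} {k K : ℕ} (hkK : k ≤ K) (hK : K ≤ w.length)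
    (hdropk : w.drop (w.length - k) = pre s k)
    (hdropK : w.drop (w.length - K) = pre s K) :
    ∀ i < k, s ((K - k) + i) = s i := by
  intro i hi
  have h1 : (w.drop (w.length - K)).drop (K - k) = w.drop (w.length - k) := by
    rw [List.drop_drop]
    congr 1
    omega
  rw [hdropK, hdropk] at h1
  have h2 : ((pre s K).drop (K - k))[i]'(by simp [pre_length]; omega) =
      (pre s k)[i]'(by simp [pre_length]; omega) := by
    congr 1
  rw [List.getElem_drop, pre_getElem s (show (K - k) + i < K by omega),
    pre_getElem s hi] at h2
  exact h2

lemma kk_append_zero_of_gt {s : ℕ → ℕ} (w : List ℕ) {c : ℕ}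
    (hle : ∀ d, 1 ≤ d → seqLe s (shiftN d s)) (hgt : s (kk s w) < c) :
    kk s (w ++ [c]) = 0 := by
  apply kk_append_zero
  intro k hk hdrop hc
  rcases Nat.eq_or_lt_of_le hk with rfl | hlt
  · omega
  · have hov := pre_overlap (le_of_lt hlt) (kk_le s w) hdrop (kk_prop s w)
    apply not_sLt_of_seqLe (hle (kk s w - k) (by omega))
    refine ⟨k, fun i hi => ?_, ?_⟩
    · show s ((kk s w - k) + i) = s i
      exact hov i hi
    show s ((kk s w - k) + k) < s k
    rw [show (kk s w - k) + k = kk s w by omega]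
    omega

lemma kk_append_zero_of_lt {s : ℕ → ℕ} (w : List ℕ) {c : ℕ}
    (hle : ∀ d, 1 ≤ d → seqLe (shiftN d s) s) (hlt' : c < s (kk s w)) :
    kk s (w ++ [c]) = 0 := by
  apply kk_append_zero
  intro k hk hdrop hc
  rcases Nat.eq_or_lt_of_le hk with rfl | hlt
  · omega
  · have hov := pre_overlap (le_of_lt hlt) (kk_le s w) hdrop (kk_prop s w)
    apply not_sLt_of_seqLe (hle (kk s w - k) (by omega))
    refine ⟨k, fun i hi => ?_, ?_⟩
    · show s i = s ((kk s w - k) + i)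
      exact (hov i hi).symm
    show s k < s ((kk s w - k) + k)
    rw [show (kk s w - k) + k = kk s w by omega]
    omega

end Aux4

/-! ### Cylinders and the main interval lemma -/

/-- The cylinder of points in `[0,1)` whose expansion starts with `w`. -/
def Dl (α β : ℝ) (w : List ℕ) : Set ℝ :=
  {x | x ∈ Set.Ico (0:ℝ) 1 ∧ ∀ i < w.length, iSeq α β x i = w.getD i 0}

section Aux5

variable {α β : ℝ}

lemma getD_concat_self (w : List ℕ) (c d : ℕ) : (w ++ [c]).getD w.length d = c := by
  rw [List.getD_eq_getElem _ _ (by simp)]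
  simp

lemma Dl_nil : Dl α β [] = Set.Ico (0:ℝ) 1 := by
  ext x; simp [Dl]

lemma Dl_append {w : List ℕ} {c : ℕ} {x : ℝ} :
    x ∈ Dl α β (w ++ [c]) ↔ x ∈ Dl α β w ∧ digit α β ((T α β)^[w.length] x) = c := by
  constructor
  · rintro ⟨hx, h⟩
    refine ⟨⟨hx, fun i hi => ?_⟩, ?_⟩
    · rw [h i (by simp; omega), List.getD_append _ _ _ _ hi]
    · have := h w.length (by simp)
      rwa [getD_concat_self] at this
  · rintro ⟨⟨hx, h⟩, hd⟩
    refine ⟨hx, fun i hi => ?_⟩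
    simp only [List.length_append, List.length_singleton] at hi
    rcases Nat.lt_or_ge i w.length with h2 | h2
    · rw [List.getD_append _ _ _ _ h2]; exact h i h2
    · have h3 : i = w.length := by omega
      subst h3
      rw [getD_concat_self]
      exact hd

lemma aSeq_digit (α β : ℝ) (j : ℕ) : aSeq α β j = digit α β ((T α β)^[j] 0) := rfl

lemma mainLemma (hα0 : 0 ≤ α) (hα1 : α < 1) (hβ : 1 < β) :
    ∀ w : List ℕ, (Dl α β w).Nonempty →
      (T α β)^[w.length] '' Dl α β w =
        Set.Ico ((T α β)^[kk (aSeq α β) w] 0) (ell α β (kk (bbSeq α β) w)) := by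
  have hβ0 : (0:ℝ) < β := by linarith
  have h01 : (0:ℝ) ∈ Set.Ico (0:ℝ) 1 := ⟨le_rfl, one_pos⟩
  intro w
  induction w using List.reverseRecOn with
  | nil =>
    intro _
    have hkk : ∀ s : ℕ → ℕ, kk s [] = 0 := fun s => Nat.findGreatest_zero
    rw [Dl_nil, hkk, hkk]
    simp [ell]
  | append_singleton w c ih =>
    intro hne
    set n := w.length with hn
    set K1 := kk (aSeq α β) w with hK1
    set K2 := kk (bbSeq α β) w with hK2
    set L := (T α β)^[K1] 0 with hL
    set R := ell α β K2 with hR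
    have hsub : Dl α β (w ++ [c]) ⊆ Dl α β w := fun x hx => (Dl_append.1 hx).1
    have hne' : (Dl α β w).Nonempty := hne.mono hsub
    have himg : (T α β)^[n] '' Dl α β w = Set.Ico L R := ih hne'
    have hLmem : L ∈ Set.Ico (0:ℝ) 1 := iter_mem h01 K1
    have hRmem : 0 < R ∧ R ≤ 1 := ell_mem hα0 hβ K2
    -- step 1
    have step1 : (T α β)^[n] '' Dl α β (w ++ [c]) =
        Set.Ico L R ∩ {x | digit α β x = c} := by
      ext t
      constructor
      · rintro ⟨z, hz, rfl⟩
        have h2 := Dl_append.1 hz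
        exact ⟨himg ▸ Set.mem_image_of_mem _ h2.1, h2.2⟩
      · rintro ⟨ht1, ht2⟩
        rw [← himg] at ht1
        obtain ⟨z, hz, rfl⟩ := ht1
        exact Set.mem_image_of_mem _ (Dl_append.2 ⟨hz, ht2⟩)
    set u := max L ((c - α)/β) with hu
    set v := min R ((c + 1 - α)/β) with hv
    -- step 2
    have step2 : Set.Ico L R ∩ {x | digit α β x = c} = Set.Ico u v := by
      ext t
      simp only [Set.mem_inter_iff, Set.mem_Ico, Set.mem_setOf_eq, hu, hv,
        max_le_iff, le_max_iff, lt_min_iff, min_lt_iff]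
      constructor
      · rintro ⟨⟨h1, h2⟩, h3⟩
        have h0t : 0 ≤ t := le_trans hLmem.1 h1
        rw [digit_eq_iff hα0 hβ h0t] at h3
        refine ⟨⟨h1, ?_⟩, h2, ?_⟩
        · rw [div_le_iff₀ hβ0]; linarith [h3.1]
        · rw [lt_div_iff₀ hβ0]; linarith [h3.2]
      · rintro ⟨⟨h1, h4⟩, h2, h5⟩
        have h0t : 0 ≤ t := le_trans hLmem.1 h1
        refine ⟨⟨h1, h2⟩, ?_⟩
        rw [digit_eq_iff hα0 hβ h0t]
        rw [div_le_iff₀ hβ0] at h4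
        rw [lt_div_iff₀ hβ0] at h5
        constructor <;> linarith
    have hIco : (T α β)^[n] '' Dl α β (w ++ [c]) = Set.Ico u v := by rw [step1, step2]
    -- nonemptiness of the interval
    obtain ⟨z0, hz0⟩ := hne
    have ht0 : (T α β)^[n] z0 ∈ Set.Ico u v := hIco ▸ Set.mem_image_of_mem _ hz0
    have huv : u < v := lt_of_le_of_lt ht0.1 ht0.2
    have huge : 0 ≤ u := le_trans hLmem.1 (le_max_left _ _)
    -- membership in Ico u v gives digit c
    have hdigc : ∀ t ∈ Set.Ico u v, digit α β t = c := by
      intro t ht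
      rw [← step2] at ht
      exact ht.2
    -- step 3 : image of the interval under T
    have step3 : T α β '' Set.Ico u v = Set.Ico (β*u + α - c) (β*v + α - c) := by
      ext t
      constructor
      · rintro ⟨x, hx, rfl⟩
        have h0x : 0 ≤ x := le_trans huge hx.1
        rw [T_of_digit hα0 hβ h0x, hdigc x hx]
        exact ⟨by nlinarith [hx.1], by nlinarith [hx.2]⟩
      · rintro ⟨h1, h2⟩
        refine ⟨(t + c - α)/β, ⟨?_, ?_⟩, ?_⟩
        · rw [le_div_iff₀ hβ0]; linarith
        · rw [div_lt_iff₀ hβ0]; linarith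
        · have hmem : (t + c - α)/β ∈ Set.Ico u v := by
            constructor
            · rw [le_div_iff₀ hβ0]; linarith
            · rw [div_lt_iff₀ hβ0]; linarith
          have h0x : 0 ≤ (t + c - α)/β := le_trans huge hmem.1
          rw [T_of_digit hα0 hβ h0x, hdigc _ hmem]
          field_simp
          ring
    have hfinal : (T α β)^[(w ++ [c]).length] '' Dl α β (w ++ [c]) =
        Set.Ico (β*u + α - c) (β*v + α - c) := by
      have hlen : (w ++ [c]).length = n + 1 := by simp [hn]
      rw [hlen, Function.iterate_succ', Set.image_comp, hIco, step3]
    rw [hfinal]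
    -- compute the endpoints
    have hdigL : digit α β L = aSeq α β K1 := (aSeq_digit α β K1).symm
    have hLeft : β*u + α - c = (T α β)^[kk (aSeq α β) (w ++ [c])] 0 := by
      by_cases hc1 : c = aSeq α β K1
      · have h1 : (c - α)/β ≤ L := by
          rw [div_le_iff₀ hβ0]
          have := (digit_eq_iff hα0 hβ hLmem.1).1 (hdigL.trans hc1.symm)
          linarith [this.1]
        have h2 : u = L := by rw [hu, max_eq_left h1]
        rw [h2, kk_append_succ _ _ (hc1.trans (by rw [hK1]))]
        rw [Function.iterate_succ_apply']
        rw [T_of_digit hα0 hβ hLmem.1, hdigL, ← hc1]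
      · have hgt : aSeq α β K1 < c := by
          have h3 := hdigc _ ht0
          have hLt0 : L ≤ (T α β)^[n] z0 := le_trans (le_max_left _ _) ht0.1
          have h4 := digit_mono hα0 hβ hLmem.1 hLt0
          rw [h3, hdigL] at h4
          omega
        have h1 : L < (c - α)/β := by
          rw [lt_div_iff₀ hβ0]
          have := (digit_eq_iff hα0 hβ hLmem.1).1 hdigL
          have h5 : (aSeq α β K1 : ℝ) + 1 ≤ c := by exact_mod_cast hgt
          linarith [this.2]
        have h2 : u = (c - α)/β := by rw [hu, max_eq_right (le_of_lt h1)]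
        rw [h2, kk_append_zero_of_gt _ (fun d hd => le_shift_a hα0 hα1 hβ d) (by rw [← hK1]; exact hgt)]
        simp
        field_simp
        ring
    have hRight : β*v + α - c = ell α β (kk (bbSeq α β) (w ++ [c])) := by
      by_cases hc2 : c = bbSeq α β K2
      · have h1 : R ≤ (c + 1 - α)/β := by
          rw [le_div_iff₀ hβ0]
          have := (bb_lt hα0 hβ (α := α) (β := β) K2).2
          rw [← hc2] at this
          linarith
        have h2 : v = R := by rw [hv, min_eq_left h1]
        rw [h2, kk_append_succ _ _ (hc2.trans (by rw [hK2]))]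
        rw [ell_succ hα0 hβ, ← hc2, hR]
      · have hlt : c < bbSeq α β K2 := by
          have h3 := hdigc _ ht0
          have h0t : 0 ≤ (T α β)^[n] z0 := le_trans huge ht0.1
          have h4 := (digit_eq_iff hα0 hβ h0t).1 h3
          have h5 : (T α β)^[n] z0 < R := lt_of_lt_of_le ht0.2 (min_le_left _ _)
          have h6 := (bb_lt hα0 hβ (α := α) (β := β) K2).2
          have h7 : (c:ℝ) < (bbSeq α β K2 : ℝ) + 1 := by
            calc (c:ℝ) ≤ β * (T α β)^[n] z0 + α := h4.1
            _ < β * R + α := by nlinarith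
            _ ≤ (bbSeq α β K2 : ℝ) + 1 := by rw [hR] at *; linarith
          have h8 : (c:ℕ) < bbSeq α β K2 + 1 := by exact_mod_cast h7
          omega
        have h1 : (c + 1 - α)/β < R := by
          rw [div_lt_iff₀ hβ0]
          have h6 := (bb_lt hα0 hβ (α := α) (β := β) K2).1
          have h7 : (c:ℝ) + 1 ≤ (bbSeq α β K2 : ℝ) := by exact_mod_cast hlt
          rw [hR]
          linarith
        have h2 : v = (c + 1 - α)/β := by rw [hv, min_eq_right (le_of_lt h1)]
        rw [h2, kk_append_zero_of_lt _ (fun d hd => shift_bb_le hα0 hβ d) (by rw [← hK2]; exact hlt)]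
        show _ = ell α β 0
        have : ell α β 0 = 1 := rfl
        rw [this]
        field_simp
        ring
    rw [hLeft, hRight]

end Aux5

section Aux6

variable {α β : ℝ}

/-- The set of genuine expansions. -/
def Dex (α β : ℝ) : Set (ℕ → ℕ) := {s | ∃ x ∈ Set.Ico (0 : ℝ) 1, s = iSeq α β x}

lemma Xab_eq_closure : Xab α β = closure (Dex α β) := rfl

lemma mem_X_iff {s : ℕ → ℕ} :
    s ∈ Xab α β ↔ ∀ N : ℕ, ∃ y ∈ Set.Ico (0:ℝ) 1, ∀ i < N, iSeq α β y i = s i := by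
  rw [Xab_eq_closure, mem_closure_seq]
  constructor
  · intro h N
    obtain ⟨d, ⟨y, hy, rfl⟩, hd⟩ := h N
    exact ⟨y, hy, hd⟩
  · intro h N
    obtain ⟨y, hy, hd⟩ := h N
    exact ⟨iSeq α β y, ⟨y, hy, rfl⟩, hd⟩

lemma mem_X_bounded (hα0 : 0 ≤ α) (hα1 : α < 1) (hβ : 1 < β) {s : ℕ → ℕ}
    (hs : s ∈ Xab α β) : ∀ i, s i ≤ lamNat α β := by
  intro i
  obtain ⟨y, hy, hd⟩ := mem_X_iff.1 hs (i+1)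
  rw [← hd i (by omega)]
  exact digit_le_lam hα0 hα1 hβ (iter_mem hy i)

lemma mem_X_ge_a (hα0 : 0 ≤ α) (hβ : 1 < β) {s : ℕ → ℕ}
    (hs : s ∈ Xab α β) : seqLe (aSeq α β) s := by
  apply seqLe_of_not_sLt
  rintro ⟨m, hag, hl⟩
  obtain ⟨y, hy, hd⟩ := mem_X_iff.1 hs (m+1)
  have h0 : (0:ℝ) ∈ Set.Ico (0:ℝ) 1 := ⟨le_rfl, one_pos⟩
  apply not_sLt_of_seqLe (iSeq_mono hα0 hβ h0 hy hy.1)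
  exact ⟨m, fun i hi => (hd i (by omega)).trans (hag i hi), by
    rw [hd m (by omega)]; exact hl⟩

lemma mem_X_le_bb (hα0 : 0 ≤ α) (hβ : 1 < β) {s : ℕ → ℕ}
    (hs : s ∈ Xab α β) : seqLe s (bbSeq α β) := by
  apply seqLe_of_not_sLt
  rintro ⟨m, hag, hl⟩
  obtain ⟨y, hy, hd⟩ := mem_X_iff.1 hs (m+1)
  apply not_sLt_of_seqLe (iSeq_le_bb hα0 hβ hy)
  exact ⟨m, fun i hi => (hag i hi).trans (hd i (by omega)).symm, by
    rw [hd m (by omega)]; exact hl⟩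

lemma shift_mem_X (hα0 : 0 ≤ α) (hβ : 1 < β) {s : ℕ → ℕ} (hs : s ∈ Xab α β) (j : ℕ) :
    shiftN j s ∈ Xab α β := by
  rw [mem_X_iff]
  intro N
  obtain ⟨y, hy, hd⟩ := mem_X_iff.1 hs (j + N)
  refine ⟨(T α β)^[j] y, iter_mem hy j, fun i hi => ?_⟩
  rw [← iSeq_add, hd (j + i) (by omega)]
  rfl

lemma iSeq_iter_zero (α β : ℝ) (j : ℕ) :
    iSeq α β ((T α β)^[j] 0) = shiftN j (aSeq α β) := by
  funext i
  rw [← iSeq_add]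
  rfl

lemma getD_one_eq_getD_zero {w : List ℕ} {i : ℕ} (h : i < w.length) :
    w.getD i 1 = w.getD i 0 := by
  rw [List.getD_eq_getElem _ _ h, List.getD_eq_getElem _ _ h]

end Aux6

/-- description of the follower set `F(w)`. -/
theorem stmt1 (α β : ℝ) (hα0 : 0 ≤ α) (hα1 : α < 1) (hβ : 1 < β)
    (b : ℕ → ℕ) (hb : Tendsto (iSeq α β) (𝓝[<] (1 : ℝ)) (𝓝 b))
    (w : List ℕ) (hw : w ∈ Lang α β) :
    {x : ℕ → ℕ | (∀ n : ℕ, x n ≤ lamNat α β) ∧ wordApp w x ∈ Xab α β} =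
      {x : ℕ → ℕ | x ∈ Xab α β ∧
        seqLe (shiftN (kk (aSeq α β) w) (aSeq α β)) x ∧
        seqLe x (shiftN (kk b w) b)} := by
  have hbb := b_eq_bb hα0 hβ hb
  subst hbb
  have hβ0 : (0:ℝ) < β := by linarith
  have h01 : (0:ℝ) ∈ Set.Ico (0:ℝ) 1 := ⟨le_rfl, one_pos⟩
  set n := w.length with hn
  set a := aSeq α β with ha
  set k1 := kk a w with hk1
  set k2 := kk (bbSeq α β) w with hk2
  have hk1n : k1 ≤ n := kk_le _ _
  have hk2n : k2 ≤ n := kk_le _ _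
  -- the cylinder of `w` is nonempty
  have hDne : (Dl α β w).Nonempty := by
    obtain ⟨s, hs, k, hws⟩ := hw
    have hgetD : ∀ i < n, w.getD i 0 = s (k + i) := by
      intro i hi
      conv_lhs => rw [hws]
      have hi2 : i < (wordN s k w.length).length := by simpa [wordN] using hi
      rw [List.getD_eq_getElem _ _ hi2]
      simp [wordN]
    obtain ⟨y, hy, hd⟩ := mem_X_iff.1 hs (k + n)
    refine ⟨(T α β)^[k] y, iter_mem hy k, fun i hi => ?_⟩
    rw [← iSeq_add, hd (k + i) (by omega), hgetD i (by omega)]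
  have hmain := mainLemma hα0 hα1 hβ w hDne
  rw [← hn, ← hk1, ← hk2] at hmain
  set L := (T α β)^[k1] 0 with hL
  set R := ell α β k2 with hR
  have hLmem : L ∈ Set.Ico (0:ℝ) 1 := iter_mem h01 k1
  have hRmem := ell_mem hα0 hβ (α := α) (β := β) k2
  rw [← hR] at hRmem
  have hLR : L < R := by
    obtain ⟨z, hz⟩ := hDne
    have h2 : (T α β)^[n] z ∈ Set.Ico L R := by
      rw [← hmain]; exact Set.mem_image_of_mem _ hz
    exact lt_of_le_of_lt h2.1 h2.2
  have hiSeqL : iSeq α β L = shiftN k1 a := by rw [hL, iSeq_iter_zero, ha]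
  ext x
  simp only [Set.mem_setOf_eq]
  constructor
  · rintro ⟨hbd, hX⟩
    have hxX : x ∈ Xab α β := by
      have hxeq : x = shiftN n (wordApp w x) := by
        funext m
        simp only [shiftN, wordApp]
        rw [if_neg (by omega)]
        congr 1
        omega
      rw [hxeq]
      exact shift_mem_X hα0 hβ hX n
    refine ⟨hxX, ?_, ?_⟩
    · -- lower bound
      have hs' : shiftN (n - k1) (wordApp w x) ∈ Xab α β := shift_mem_X hα0 hβ hX _
      have hle := mem_X_ge_a hα0 hβ hs'
      rw [← ha] at hle
      have hpre : ∀ i < k1, shiftN (n - k1) (wordApp w x) i = a i := by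
        intro i hi
        have h1 : n - k1 + i < w.length := by omega
        simp only [shiftN, wordApp]
        rw [if_pos h1, getD_one_eq_getD_zero h1, List.getD_eq_getElem _ _ h1]
        have h3 : w[n - k1 + i]'h1 =
            (w.drop (w.length - k1))[i]'(by rw [List.length_drop]; omega) := by
          rw [List.getElem_drop]
        rw [h3]
        have h4 : w.drop (w.length - k1) = pre a k1 := by
          rw [hk1, ha]; exact kk_prop _ _
        simp only [h4]
        exact pre_getElem a hi
      have hsuf : ∀ i, shiftN (n - k1) (wordApp w x) (k1 + i) = x i := by
        intro i
        simp only [shiftN, wordApp]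
        rw [if_neg (by omega)]
        congr 1
        omega
      rcases hle with heq | ⟨m, hag, hl⟩
      · refine Or.inl ?_
        funext i
        show a (k1 + i) = x i
        rw [← hsuf i]
        exact congrFun heq (k1 + i)
      · have hm : k1 ≤ m := by
          by_contra h
          push_neg at h
          rw [hpre m h] at hl
          omega
        refine Or.inr ⟨m - k1, fun i hi => ?_, ?_⟩
        · show a (k1 + i) = x i
          rw [← hsuf i]
          exact hag (k1 + i) (by omega)
        · show a (k1 + (m - k1)) < x (m - k1)
          rw [← hsuf (m - k1), show k1 + (m - k1) = m by omega]
          exact hl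
    · -- upper bound
      have hs'' : shiftN (n - k2) (wordApp w x) ∈ Xab α β := shift_mem_X hα0 hβ hX _
      have hle := mem_X_le_bb hα0 hβ hs''
      have hpre : ∀ i < k2, shiftN (n - k2) (wordApp w x) i = bbSeq α β i := by
        intro i hi
        have h1 : n - k2 + i < w.length := by omega
        simp only [shiftN, wordApp]
        rw [if_pos h1, getD_one_eq_getD_zero h1, List.getD_eq_getElem _ _ h1]
        have h3 : w[n - k2 + i]'h1 =
            (w.drop (w.length - k2))[i]'(by rw [List.length_drop]; omega) := by
          rw [List.getElem_drop]
        rw [h3]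
        have h4 : w.drop (w.length - k2) = pre (bbSeq α β) k2 := by
          rw [hk2]; exact kk_prop _ _
        simp only [h4]
        exact pre_getElem _ hi
      have hsuf : ∀ i, shiftN (n - k2) (wordApp w x) (k2 + i) = x i := by
        intro i
        simp only [shiftN, wordApp]
        rw [if_neg (by omega)]
        congr 1
        omega
      rcases hle with heq | ⟨m, hag, hl⟩
      · refine Or.inl ?_
        funext i
        show x i = bbSeq α β (k2 + i)
        rw [← hsuf i]
        exact congrFun heq (k2 + i)
      · have hm : k2 ≤ m := by
          by_contra h
          push_neg at h
          rw [hpre m h] at hl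
          omega
        refine Or.inr ⟨m - k2, fun i hi => ?_, ?_⟩
        · show x i = bbSeq α β (k2 + i)
          rw [← hsuf i]
          exact hag (k2 + i) (by omega)
        · show x (m - k2) < bbSeq α β (k2 + (m - k2))
          rw [← hsuf (m - k2), show k2 + (m - k2) = m by omega]
          exact hl
  · rintro ⟨hxX, hge, hle⟩
    refine ⟨fun i => mem_X_bounded hα0 hα1 hβ hxX i, ?_⟩
    rw [mem_X_iff]
    intro N
    obtain ⟨y, hy, hyx⟩ := mem_X_iff.1 hxX N
    have key : ∃ t' ∈ Set.Ico L R, ∀ i < N, iSeq α β t' i = x i := by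
      rcases lt_or_ge y L with hcase | hcase
      · -- y < L
        have hmono := iSeq_mono hα0 hβ hy hLmem (le_of_lt hcase)
        rw [hiSeqL] at hmono
        have hxa : ∀ i < N, x i = shiftN k1 a i := by
          rcases hge with heq | ⟨m, hag, hl⟩
          · intro i hi; rw [← heq]
          · have hmN : N ≤ m := by
              by_contra hc
              push_neg at hc
              apply not_sLt_of_seqLe hmono
              refine ⟨m, fun j hj => (hag j hj).trans (hyx j (by omega)).symm, ?_⟩
              rw [hyx m (by omega)]
              exact hl
            intro i hi
            exact (hag i (by omega)).symm
        refine ⟨L, ⟨le_rfl, hLR⟩, fun i hi => ?_⟩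
        rw [hiSeqL]
        exact (hxa i hi).symm
      rcases lt_or_ge y R with hcase2 | hcase2
      · exact ⟨y, ⟨hcase, hcase2⟩, fun i hi => hyx i hi⟩
      · -- R ≤ y
        have hbLe : seqLe (shiftN k2 (bbSeq α β)) (iSeq α β y) := by
          apply seqLe_of_not_sLt
          rintro ⟨m, hag, hl⟩
          obtain ⟨δ, hδ0, hδ1, hδ2⟩ := leftLim hα0 hβ (α := α) (β := β) (m+1) k2
          rw [← hR] at hδ1 hδ2
          have hε0 : 0 < min δ (R - L) := lt_min hδ0 (by linarith)
          set t'' := R - min δ (R - L) / 2 with ht''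
          have h1 : R - δ < t'' := by
            have := min_le_left δ (R - L)
            rw [ht'']
            linarith
          have h2 : t'' < R := by rw [ht'']; linarith
          have h3 : L ≤ t'' := by
            have := min_le_right δ (R - L)
            rw [ht'']
            linarith
          have ht''m : t'' ∈ Set.Ico (0:ℝ) 1 := ⟨le_trans hLmem.1 h3, lt_of_lt_of_le h2 hRmem.2⟩
          have hagree : ∀ i < m + 1, iSeq α β t'' i = bbSeq α β (k2 + i) := hδ2 t'' h1 h2
          apply not_sLt_of_seqLe
            (iSeq_mono hα0 hβ ht''m hy (le_trans (le_of_lt h2) hcase2))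
          refine ⟨m, fun j hj => ?_, ?_⟩
          · rw [hag j hj, hagree j (by omega)]
            rfl
          · rw [hagree m (by omega)]
            exact hl
        have hxb : ∀ i < N, x i = shiftN k2 (bbSeq α β) i := by
          rcases hle with heq | ⟨m, hag, hl⟩
          · intro i hi; rw [heq]
          · have hmN : N ≤ m := by
              by_contra hc
              push_neg at hc
              apply not_sLt_of_seqLe hbLe
              refine ⟨m, fun j hj => (hyx j (by omega)).trans (hag j hj), ?_⟩
              rw [hyx m (by omega)]
              exact hl
            intro i hi
            exact hag i (by omega)
        obtain ⟨δ, hδ0, hδ1, hδ2⟩ := leftLim hα0 hβ (α := α) (β := β) N k2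
        rw [← hR] at hδ1 hδ2
        have hε0 : 0 < min δ (R - L) := lt_min hδ0 (by linarith)
        set t'' := R - min δ (R - L) / 2 with ht''
        have h1 : R - δ < t'' := by
          have := min_le_left δ (R - L)
          rw [ht'']
          linarith
        have h2 : t'' < R := by rw [ht'']; linarith
        have h3 : L ≤ t'' := by
          have := min_le_right δ (R - L)
          rw [ht'']
          linarith
        refine ⟨t'', ⟨h3, h2⟩, fun i hi => ?_⟩
        rw [hδ2 t'' h1 h2 i hi]
        exact (hxb i hi).symm
    obtain ⟨t', ht', hts⟩ := key
    have hmem2 : t' ∈ (T α β)^[n] '' Dl α β w := by rw [hmain]; exact ht'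
    obtain ⟨z, hz, hzt⟩ := hmem2
    refine ⟨z, hz.1, fun i hi => ?_⟩
    rcases lt_or_ge i n with hin | hin
    · have hin' : i < w.length := by omega
      rw [hz.2 i hin']
      simp only [wordApp]
      rw [if_pos hin', getD_one_eq_getD_zero hin']
    · obtain ⟨i', rfl⟩ : ∃ i', i = n + i' := ⟨i - n, by omega⟩
      have hieq : n + i' = w.length + i' := by omega
      rw [hieq, iSeq_add, ← hieq]
      rw [show (T α β)^[n] z = t' from by rw [← hieq] at *; exact hzt]
      rw [hts i' (by omega)]
      simp only [wordApp]
      rw [if_neg (by omega)]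
      congr 1
      omega

end AB
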